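/- (Angle–distance coupling of uniform-offset FDA) Let M ≥ 1, δf > 0, c > 0, and fix (R_i, θ_i) ∈ ℝ × ℝ. For the uniform-offset FDA steering vector a(R, θ) with m-th entry (1/√M)·exp(i·2π·m·(sin θ/2 − δf·R/c)), for every angle θ_j ∈ ℝ there exists R_j ∈ ℝ such that |a(R_i, θ_i)^H · a(R_j, θ_j)| = 1. Hence for a fixed target location there are infinitely many locations (R_j, θ_j), one at every angle, that are indistinguishable from it, producing the S-shaped beampattern. -/

import Mathlib

/-- The normalized uniform-offset FDA steering vector at location `(R, θ)`:
`m`-th entry `(1/√M)·exp(i·2π·m·(sin θ/2 − δf·R/c))`. -/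
noncomputable def steer (M : ℕ) (δf c R θ : ℝ) (m : Fin M) : ℂ :=
  ((Real.sqrt (M : ℝ) : ℝ) : ℂ)⁻¹ *
    Complex.exp (Complex.I *
      ((2 * Real.pi * ((m : ℕ) : ℝ) * (Real.sin θ / 2 - δf * R / c) : ℝ) : ℂ))

/-- (Angle–distance coupling of uniform-offset FDA) Fix `(R_i, θ_i)`. For
every angle `θ_j` there exists a distance `R_j` such that the correlation
`|a(R_i,θ_i)^H · a(R_j,θ_j)| = 1`: at every angle there is a location
indistinguishable from the target, producing the S-shaped beampattern. -/
theorem stmt_14 (M : ℕ) (hM : 1 ≤ M) (δf c : ℝ) (hδf : 0 < δf) (hc : 0 < c)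
    (Ri θi : ℝ) :
    ∀ θj : ℝ, ∃ Rj : ℝ,
      ‖(∑ m : Fin M,
        (starRingEnd ℂ) (steer M δf c Ri θi m) * steer M δf c Rj θj m)‖ = 1 := by
  intro θj
  refine ⟨Ri + c * (Real.sin θj - Real.sin θi) / (2 * δf), ?_⟩
  have hMpos : (0 : ℝ) < M := by exact_mod_cast hM
  have hphase : Real.sin θj / 2 - δf * (Ri + c * (Real.sin θj - Real.sin θi) / (2 * δf)) / c
      = Real.sin θi / 2 - δf * Ri / c := by
    field_simp
    ring
  have hterm : ∀ m : Fin M,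
      (starRingEnd ℂ) (steer M δf c Ri θi m) *
        steer M δf c (Ri + c * (Real.sin θj - Real.sin θi) / (2 * δf)) θj m
      = ((M : ℝ) : ℂ)⁻¹ := by
    intro m
    unfold steer
    rw [hphase]
    set x : ℝ := 2 * Real.pi * ((m : ℕ) : ℝ) * (Real.sin θi / 2 - δf * Ri / c)
    rw [map_mul, ← Complex.exp_conj]
    have : (starRingEnd ℂ) (Complex.I * (x : ℂ)) = -(Complex.I * (x : ℂ)) := by
      simp [Complex.conj_I, mul_comm]
    rw [this, Complex.exp_neg, map_inv₀, Complex.conj_ofReal]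
    have hexp := Complex.exp_ne_zero (Complex.I * (x : ℂ))
    have hs : ((Real.sqrt (M : ℝ) : ℝ) : ℂ) ≠ 0 := by
      exact_mod_cast (Real.sqrt_pos.mpr hMpos).ne'
    have hs2 : ((Real.sqrt (M : ℝ) : ℝ) : ℂ) * ((Real.sqrt (M : ℝ) : ℝ) : ℂ)
        = ((M : ℝ) : ℂ) := by
      norm_cast
      exact Real.mul_self_sqrt hMpos.le
    rw [← hs2, mul_inv]
    field_simp
  rw [Finset.sum_congr rfl (fun m _ => hterm m)]
  rw [Finset.sum_const, Finset.card_univ, Fintype.card_fin, nsmul_eq_mul]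
  have h1 : ((M : ℕ) : ℂ) * ((M : ℝ) : ℂ)⁻¹ = 1 := by
    push_cast
    exact mul_inv_cancel₀ (by exact_mod_cast hMpos.ne')
  rw [h1]
  simp
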